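/- In the setting of the three-quantizer error formula, assume additionally: constants M_0, M_1, M_2, M_3, M_4 > 0, 0 < ρ̄ ≤ ρ < 1 with ‖C R^ℓ‖ ≤ M_0 ρ^ℓ, ‖C R̄^ℓ L‖ ≤ M_1 ρ̄^ℓ, ‖K R̄^ℓ L‖ ≤ M_2 ρ̄^ℓ, ‖C R^ℓ B_d‖ ≤ M_3 ρ^ℓ, ‖C R^ℓ L‖ ≤ M_4 ρ^ℓ for all ℓ (where R := A_d − LC, R̄ := A_d − B_dK); integers N, N_1, N_2 ≥ 2; x̂_0 = 0 and |e_0|_∞ ≤ E_st; a sequence E : ℕ → ℝ with μ_j := E_j/N such that for all j: |y_j − q_j|_∞ ≤ μ_j, |q_j − v_j|_∞ ≤ (N−1)μ_j, |ŷ_j − v_j|_∞ ≤ E_{1,j}/N_1, and |u_j − w_j|_∞ ≤ E_{2,j}/N_2, where E_{1,j} := ((N−1)M_1/N) Σ_{ℓ=0}^{j−1} ρ̄^ℓ E_{j−ℓ−1} and E_{2,j} := ((N−1)M_2/N) Σ_{ℓ=0}^{j−1} ρ̄^ℓ E_{j−ℓ−1}. Set M := (N−1)(M_1 M_4/N_1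 + M_2 M_3/N_2). Then for every k ≥ 0: |y_{k+1} − v_{k+1}|_∞ ≤ M_0 E_st ρ^{k+1} + (M_4 + (N−1)M_1/N_1) Σ_{ℓ=0}^{k} ρ^ℓ μ_{k−ℓ} + M Σ_{ℓ=0}^{k−1} Σ_{i=0}^{k−ℓ−1} ρ^{ℓ+i} μ_{k−ℓ−i−1}. -/

import Mathlib

/-- The operator norm of a matrix induced by the `ℓ∞` (max) norms on
vectors, i.e. `‖M‖ = sup {|Mv|_∞ : |v|_∞ = 1}`. -/
noncomputable def opNorm {m n : ℕ} (M : Matrix (Fin m) (Fin n) ℝ) : ℝ :=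
  ‖LinearMap.toContinuousLinearMap (Matrix.mulVecLin M)‖

lemma opNorm_mulVec_le {m n : ℕ} (A : Matrix (Fin m) (Fin n) ℝ) (v : Fin n → ℝ) :
    ‖A.mulVec v‖ ≤ opNorm A * ‖v‖ := by
  simpa [opNorm] using (LinearMap.toContinuousLinearMap (Matrix.mulVecLin A)).le_opNorm v

/-- Key intermediate bound in the proof of Theorem 3: the distance between
the plant output `y_{k+1} = C x_{k+1}` and the quantization center
`v_{k+1} = Q₁(ŷ_{k+1})` is bounded by the triple-constant formula. -/
theorem three_quantizer_output_center_bound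
    {n m p : ℕ}
    (Ad : Matrix (Fin n) (Fin n) ℝ) (Bd : Matrix (Fin n) (Fin m) ℝ)
    (C : Matrix (Fin p) (Fin n) ℝ) (K : Matrix (Fin m) (Fin n) ℝ)
    (L : Matrix (Fin n) (Fin p) ℝ)
    (R Rbar : Matrix (Fin n) (Fin n) ℝ)
    (hR : R = Ad - L * C) (hRbar : Rbar = Ad - Bd * K)
    (M₀ M₁ M₂ M₃ M₄ ρ ρbar : ℝ)
    (hM₀ : 0 < M₀) (hM₁ : 0 < M₁) (hM₂ : 0 < M₂) (hM₃ : 0 < M₃) (hM₄ : 0 < M₄)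
    (hρbar : 0 < ρbar) (hρρbar : ρbar ≤ ρ) (hρ : ρ < 1)
    (hCR : ∀ ℓ : ℕ, opNorm (C * R ^ ℓ) ≤ M₀ * ρ ^ ℓ)
    (hCRbarL : ∀ ℓ : ℕ, opNorm (C * Rbar ^ ℓ * L) ≤ M₁ * ρbar ^ ℓ)
    (hKRbarL : ∀ ℓ : ℕ, opNorm (K * Rbar ^ ℓ * L) ≤ M₂ * ρbar ^ ℓ)
    (hCRB : ∀ ℓ : ℕ, opNorm (C * R ^ ℓ * Bd) ≤ M₃ * ρ ^ ℓ)
    (hCRL : ∀ ℓ : ℕ, opNorm (C * R ^ ℓ * L) ≤ M₄ * ρ ^ ℓ)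
    (N N₁ N₂ : ℕ) (hN : 2 ≤ N) (hN₁ : 2 ≤ N₁) (hN₂ : 2 ≤ N₂)
    (x xhat : ℕ → Fin n → ℝ) (q v : ℕ → Fin p → ℝ) (w : ℕ → Fin m → ℝ)
    (hxhat0 : xhat 0 = 0)
    (Est : ℝ) (he0 : ‖x 0 - xhat 0‖ ≤ Est)
    (hx : ∀ k : ℕ, x (k + 1) = Ad.mulVec (x k) + Bd.mulVec (w k))
    (hxhat : ∀ k : ℕ,
      xhat (k + 1) = Ad.mulVec (xhat k) - Bd.mulVec (K.mulVec (xhat k))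
        + L.mulVec (q k - v k))
    (E : ℕ → ℝ) (μ : ℕ → ℝ) (hμ : ∀ j : ℕ, μ j = E j / N)
    (E₁ E₂ : ℕ → ℝ)
    (hE₁ : ∀ j : ℕ, E₁ j =
      (((N : ℝ) - 1) * M₁ / N) * ∑ ℓ ∈ Finset.range j, ρbar ^ ℓ * E (j - ℓ - 1))
    (hE₂ : ∀ j : ℕ, E₂ j =
      (((N : ℝ) - 1) * M₂ / N) * ∑ ℓ ∈ Finset.range j, ρbar ^ ℓ * E (j - ℓ - 1))
    (hyq : ∀ j : ℕ, ‖C.mulVec (x j) - q j‖ ≤ μ j)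
    (hqv : ∀ j : ℕ, ‖q j - v j‖ ≤ ((N : ℝ) - 1) * μ j)
    (hyhatv : ∀ j : ℕ, ‖C.mulVec (xhat j) - v j‖ ≤ E₁ j / N₁)
    (huw : ∀ j : ℕ, ‖(-(K.mulVec (xhat j))) - w j‖ ≤ E₂ j / N₂)
    (M : ℝ)
    (hMdef : M = ((N : ℝ) - 1) * (M₁ * M₄ / (N₁ : ℝ) + M₂ * M₃ / (N₂ : ℝ))) :
    ∀ k : ℕ,
      ‖C.mulVec (x (k + 1)) - v (k + 1)‖ ≤
        M₀ * Est * ρ ^ (k + 1)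
        + (M₄ + ((N : ℝ) - 1) * M₁ / (N₁ : ℝ)) *
            ∑ ℓ ∈ Finset.range (k + 1), ρ ^ ℓ * μ (k - ℓ)
        + M * ∑ ℓ ∈ Finset.range k, ∑ i ∈ Finset.range (k - ℓ),
            ρ ^ (ℓ + i) * μ (k - ℓ - i - 1) := by
  -- basic positivity facts
  have hNpos : (0:ℝ) < (N:ℝ) := by exact_mod_cast Nat.lt_of_lt_of_le (by norm_num) hN
  have hN₁pos : (0:ℝ) < (N₁:ℝ) := by exact_mod_cast Nat.lt_of_lt_of_le (by norm_num) hN₁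
  have hN₂pos : (0:ℝ) < (N₂:ℝ) := by exact_mod_cast Nat.lt_of_lt_of_le (by norm_num) hN₂
  have hN1 : (1:ℝ) ≤ (N:ℝ) - 1 := by
    have : (2:ℝ) ≤ (N:ℝ) := by exact_mod_cast hN
    linarith
  have hρ0 : 0 ≤ ρ := le_trans hρbar.le hρρbar
  have hμ0 : ∀ j, 0 ≤ μ j := fun j => le_trans (norm_nonneg _) (hyq j)
  have hEeq : ∀ j, E j = (N:ℝ) * μ j := by
    intro j; rw [hμ j]; field_simp
  set c₁ : ℝ := ((N : ℝ) - 1) * M₁ / N₁ with hc₁def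
  set c₂ : ℝ := ((N : ℝ) - 1) * M₂ / N₂ with hc₂def
  have hc₁0 : 0 ≤ c₁ := by positivity
  have hE₁' : ∀ j, E₁ j / N₁ = c₁ * ∑ i ∈ Finset.range j, ρbar ^ i * μ (j - i - 1) := by
    intro j
    rw [hE₁ j]
    have hs : ∑ i ∈ Finset.range j, ρbar ^ i * E (j - i - 1)
        = (N:ℝ) * ∑ i ∈ Finset.range j, ρbar ^ i * μ (j - i - 1) := by
      rw [Finset.mul_sum]
      exact Finset.sum_congr rfl (fun i _ => by rw [hEeq]; ring)
    rw [hs, hc₁def]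
    field_simp
  have hE₂' : ∀ j, E₂ j / N₂ = c₂ * ∑ i ∈ Finset.range j, ρbar ^ i * μ (j - i - 1) := by
    intro j
    rw [hE₂ j]
    have hs : ∑ i ∈ Finset.range j, ρbar ^ i * E (j - i - 1)
        = (N:ℝ) * ∑ i ∈ Finset.range j, ρbar ^ i * μ (j - i - 1) := by
      rw [Finset.mul_sum]
      exact Finset.sum_congr rfl (fun i _ => by rw [hEeq]; ring)
    rw [hs, hc₂def]
    field_simp
  -- the disturbance term
    -- d j collects the three quantization errors
  set d : ℕ → Fin n → ℝ := fun j =>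
    L.mulVec (C.mulVec (x j) - q j) - L.mulVec (C.mulVec (xhat j) - v j)
      - Bd.mulVec ((-(K.mulVec (xhat j))) - w j) with hddef
  have hstep : ∀ k : ℕ, x (k+1) - xhat (k+1) = R.mulVec (x k - xhat k) + d k := by
    intro k
    rw [hx, hxhat, hR, hddef]
    simp only [Matrix.sub_mulVec, Matrix.mulVec_sub, Matrix.mulVec_add, Matrix.mulVec_neg,
      ← Matrix.mulVec_mulVec]
    abel
  -- closed-form error formula
  have hform : ∀ k : ℕ, x (k+1) - xhat (k+1)
      = (R ^ (k+1)).mulVec (x 0 - xhat 0)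
        + ∑ ℓ ∈ Finset.range (k+1), (R ^ ℓ).mulVec (d (k - ℓ)) := by
    intro k
    induction k with
    | zero =>
      rw [hstep 0]
      simp [Matrix.one_mulVec]
    | succ k ih =>
      rw [hstep (k+1), ih, Matrix.mulVec_add]
      have h1 : R.mulVec ((R ^ (k+1)).mulVec (x 0 - xhat 0))
          = (R ^ (k+2)).mulVec (x 0 - xhat 0) := by
        rw [Matrix.mulVec_mulVec, ← pow_succ']
      have h2 : R.mulVec (∑ ℓ ∈ Finset.range (k+1), (R ^ ℓ).mulVec (d (k - ℓ)))
          = ∑ ℓ ∈ Finset.range (k+1), (R ^ (ℓ+1)).mulVec (d (k - ℓ)) := by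
        rw [show R.mulVec = (Matrix.mulVecLin R : (Fin n → ℝ) →ₗ[ℝ] (Fin n → ℝ)) from rfl,
          map_sum]
        exact Finset.sum_congr rfl (fun ℓ _ => by
          simp [Matrix.mulVec_mulVec, ← pow_succ'])
      rw [h1, h2, Finset.sum_range_succ' (fun ℓ => (R ^ ℓ).mulVec (d (k + 1 - ℓ)))]
      simp only [Nat.succ_sub_succ, pow_zero, Matrix.one_mulVec, Nat.sub_zero]
      abel
  intro k
  -- decompose the quantity to be bounded
  have hdecomp : C.mulVec (x (k+1)) - v (k+1)
      = (C * R ^ (k+1)).mulVec (x 0 - xhat 0)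
        + ∑ ℓ ∈ Finset.range (k+1), (C * R ^ ℓ).mulVec (d (k - ℓ))
        + (C.mulVec (xhat (k+1)) - v (k+1)) := by
    have h0 : C.mulVec (x (k+1)) - v (k+1)
        = C.mulVec (x (k+1) - xhat (k+1)) + (C.mulVec (xhat (k+1)) - v (k+1)) := by
      rw [Matrix.mulVec_sub]; abel
    rw [h0, hform k, Matrix.mulVec_add]
    have h2 : C.mulVec (∑ ℓ ∈ Finset.range (k+1), (R ^ ℓ).mulVec (d (k - ℓ)))
        = ∑ ℓ ∈ Finset.range (k+1), (C * R ^ ℓ).mulVec (d (k - ℓ)) := by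
      rw [show C.mulVec = (Matrix.mulVecLin C : (Fin n → ℝ) →ₗ[ℝ] (Fin p → ℝ)) from rfl,
        map_sum]
      exact Finset.sum_congr rfl (fun ℓ _ => by simp [Matrix.mulVec_mulVec])
    rw [h2, Matrix.mulVec_mulVec]
  -- bound each of the three pieces
  have T0 : ‖(C * R ^ (k+1)).mulVec (x 0 - xhat 0)‖ ≤ M₀ * Est * ρ ^ (k+1) := by
    calc ‖(C * R ^ (k+1)).mulVec (x 0 - xhat 0)‖
        ≤ opNorm (C * R ^ (k+1)) * ‖x 0 - xhat 0‖ := opNorm_mulVec_le _ _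
      _ ≤ (M₀ * ρ ^ (k+1)) * Est := by
          apply mul_le_mul (hCR (k+1)) he0 (norm_nonneg _) (by positivity)
      _ = M₀ * Est * ρ ^ (k+1) := by ring
  have Tl : ∀ ℓ : ℕ, ‖(C * R ^ ℓ).mulVec (d (k - ℓ))‖
      ≤ M₄ * ρ ^ ℓ * μ (k - ℓ) + (M₄ * ρ ^ ℓ * (E₁ (k - ℓ) / N₁)
          + M₃ * ρ ^ ℓ * (E₂ (k - ℓ) / N₂)) := by
    intro ℓ
    set j := k - ℓ
    have hde : (C * R ^ ℓ).mulVec (d j)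
        = (C * R ^ ℓ * L).mulVec (C.mulVec (x j) - q j)
          - (C * R ^ ℓ * L).mulVec (C.mulVec (xhat j) - v j)
          - (C * R ^ ℓ * Bd).mulVec ((-(K.mulVec (xhat j))) - w j) := by
      rw [hddef]
      simp only [Matrix.mulVec_sub, ← Matrix.mulVec_mulVec]
    rw [hde]
    have b1 : ‖(C * R ^ ℓ * L).mulVec (C.mulVec (x j) - q j)‖ ≤ M₄ * ρ ^ ℓ * μ j :=
      le_trans (opNorm_mulVec_le _ _)
        (mul_le_mul (hCRL ℓ) (hyq j) (norm_nonneg _) (by positivity))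
    have b2 : ‖(C * R ^ ℓ * L).mulVec (C.mulVec (xhat j) - v j)‖
        ≤ M₄ * ρ ^ ℓ * (E₁ j / N₁) :=
      le_trans (opNorm_mulVec_le _ _)
        (mul_le_mul (hCRL ℓ) (hyhatv j) (norm_nonneg _) (by positivity))
    have b3 : ‖(C * R ^ ℓ * Bd).mulVec ((-(K.mulVec (xhat j))) - w j)‖
        ≤ M₃ * ρ ^ ℓ * (E₂ j / N₂) :=
      le_trans (opNorm_mulVec_le _ _)
        (mul_le_mul (hCRB ℓ) (huw j) (norm_nonneg _) (by positivity))
    calc ‖_ - _ - _‖ ≤ ‖_ - _‖ + ‖_‖ := norm_sub_le _ _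
      _ ≤ (‖_‖ + ‖_‖) + ‖_‖ := by gcongr; exact norm_sub_le _ _
      _ ≤ (M₄ * ρ ^ ℓ * μ j + M₄ * ρ ^ ℓ * (E₁ j / N₁)) + M₃ * ρ ^ ℓ * (E₂ j / N₂) := by
          gcongr
      _ = _ := by ring
  -- the last piece
  have T2 : ‖C.mulVec (xhat (k+1)) - v (k+1)‖
      ≤ c₁ * ∑ ℓ ∈ Finset.range (k+1), ρ ^ ℓ * μ (k - ℓ) := by
    refine le_trans (hyhatv (k+1)) ?_
    rw [hE₁' (k+1)]
    have : ∀ i ∈ Finset.range (k+1), ρbar ^ i * μ (k + 1 - i - 1) ≤ ρ ^ i * μ (k - i) := by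
      intro i _
      have hidx : k + 1 - i - 1 = k - i := by omega
      rw [hidx]
      exact mul_le_mul_of_nonneg_right (pow_le_pow_left₀ hρbar.le hρρbar i) (hμ0 _)
    exact mul_le_mul_of_nonneg_left (Finset.sum_le_sum this) hc₁0
  -- the cross-term double sum
  have TB : ∑ ℓ ∈ Finset.range (k+1),
        (M₄ * ρ ^ ℓ * (E₁ (k - ℓ) / N₁) + M₃ * ρ ^ ℓ * (E₂ (k - ℓ) / N₂))
      ≤ M * ∑ ℓ ∈ Finset.range k, ∑ i ∈ Finset.range (k - ℓ),
          ρ ^ (ℓ + i) * μ (k - ℓ - i - 1) := by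
    rw [Finset.sum_range_succ]
    have hlast : M₄ * ρ ^ k * (E₁ (k - k) / N₁) + M₃ * ρ ^ k * (E₂ (k - k) / N₂) = 0 := by
      simp [hE₁ 0, hE₂ 0]
    rw [hlast, add_zero, Finset.mul_sum]
    apply Finset.sum_le_sum
    intro ℓ hℓ
    rw [hE₁', hE₂']
    have hMc : M₄ * c₁ + M₃ * c₂ = M := by
      rw [hMdef, hc₁def, hc₂def]; field_simp
    have hM0 : 0 ≤ M := by rw [hMdef]; positivity
    have step1 : M₄ * ρ ^ ℓ * (c₁ * ∑ i ∈ Finset.range (k - ℓ), ρbar ^ i * μ (k - ℓ - i - 1))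
          + M₃ * ρ ^ ℓ * (c₂ * ∑ i ∈ Finset.range (k - ℓ), ρbar ^ i * μ (k - ℓ - i - 1))
        = ∑ i ∈ Finset.range (k - ℓ), M * (ρ ^ ℓ * (ρbar ^ i * μ (k - ℓ - i - 1))) := by
      simp only [Finset.mul_sum, ← Finset.sum_add_distrib]
      refine Finset.sum_congr rfl (fun i _ => ?_)
      rw [← hMc]; ring
    rw [step1, Finset.mul_sum]
    apply Finset.sum_le_sum
    intro i _
    calc M * (ρ ^ ℓ * (ρbar ^ i * μ (k - ℓ - i - 1)))
        ≤ M * (ρ ^ ℓ * (ρ ^ i * μ (k - ℓ - i - 1))) :=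
          mul_le_mul_of_nonneg_left
            (mul_le_mul_of_nonneg_left
              (mul_le_mul_of_nonneg_right (pow_le_pow_left₀ hρbar.le hρρbar i) (hμ0 _))
              (pow_nonneg hρ0 ℓ)) hM0
      _ = M * (ρ ^ (ℓ + i) * μ (k - ℓ - i - 1)) := by rw [pow_add]; ring
  -- put everything together
  rw [hdecomp]
  have halltri : ‖(C * R ^ (k+1)).mulVec (x 0 - xhat 0)
        + ∑ ℓ ∈ Finset.range (k+1), (C * R ^ ℓ).mulVec (d (k - ℓ))
        + (C.mulVec (xhat (k+1)) - v (k+1))‖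
      ≤ ‖(C * R ^ (k+1)).mulVec (x 0 - xhat 0)‖
        + ∑ ℓ ∈ Finset.range (k+1), ‖(C * R ^ ℓ).mulVec (d (k - ℓ))‖
        + ‖C.mulVec (xhat (k+1)) - v (k+1)‖ := by
    refine le_trans norm_add₃_le ?_
    gcongr
    exact norm_sum_le _ _
  refine le_trans halltri ?_
  have hsum : ∑ ℓ ∈ Finset.range (k+1), ‖(C * R ^ ℓ).mulVec (d (k - ℓ))‖
      ≤ ∑ ℓ ∈ Finset.range (k+1), (M₄ * ρ ^ ℓ * μ (k - ℓ)
          + (M₄ * ρ ^ ℓ * (E₁ (k - ℓ) / N₁) + M₃ * ρ ^ ℓ * (E₂ (k - ℓ) / N₂))) :=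
    Finset.sum_le_sum (fun ℓ _ => Tl ℓ)
  have hsplit : ∑ ℓ ∈ Finset.range (k+1), (M₄ * ρ ^ ℓ * μ (k - ℓ)
        + (M₄ * ρ ^ ℓ * (E₁ (k - ℓ) / N₁) + M₃ * ρ ^ ℓ * (E₂ (k - ℓ) / N₂)))
      = M₄ * (∑ ℓ ∈ Finset.range (k+1), ρ ^ ℓ * μ (k - ℓ))
        + ∑ ℓ ∈ Finset.range (k+1),
            (M₄ * ρ ^ ℓ * (E₁ (k - ℓ) / N₁) + M₃ * ρ ^ ℓ * (E₂ (k - ℓ) / N₂)) := by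
    rw [Finset.sum_add_distrib, Finset.mul_sum]
    congr 1
    exact Finset.sum_congr rfl (fun ℓ _ => by ring)
  calc ‖(C * R ^ (k+1)).mulVec (x 0 - xhat 0)‖
        + ∑ ℓ ∈ Finset.range (k+1), ‖(C * R ^ ℓ).mulVec (d (k - ℓ))‖
        + ‖C.mulVec (xhat (k+1)) - v (k+1)‖
      ≤ M₀ * Est * ρ ^ (k+1)
        + (M₄ * (∑ ℓ ∈ Finset.range (k+1), ρ ^ ℓ * μ (k - ℓ))
          + ∑ ℓ ∈ Finset.range (k+1),
              (M₄ * ρ ^ ℓ * (E₁ (k - ℓ) / N₁) + M₃ * ρ ^ ℓ * (E₂ (k - ℓ) / N₂)))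
        + c₁ * ∑ ℓ ∈ Finset.range (k+1), ρ ^ ℓ * μ (k - ℓ) := by
        refine add_le_add (add_le_add T0 ?_) T2
        rw [← hsplit]; exact hsum
    _ ≤ M₀ * Est * ρ ^ (k+1)
        + (M₄ * (∑ ℓ ∈ Finset.range (k+1), ρ ^ ℓ * μ (k - ℓ))
          + M * ∑ ℓ ∈ Finset.range k, ∑ i ∈ Finset.range (k - ℓ),
              ρ ^ (ℓ + i) * μ (k - ℓ - i - 1))
        + c₁ * ∑ ℓ ∈ Finset.range (k+1), ρ ^ ℓ * μ (k - ℓ) := by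
        gcongr
    _ = M₀ * Est * ρ ^ (k+1)
        + (M₄ + c₁) * ∑ ℓ ∈ Finset.range (k+1), ρ ^ ℓ * μ (k - ℓ)
        + M * ∑ ℓ ∈ Finset.range k, ∑ i ∈ Finset.range (k - ℓ),
            ρ ^ (ℓ + i) * μ (k - ℓ - i - 1) := by ring
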